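/- Let L be a Lie algebra over ℝ, let λ ∈ ℝ with λ ≠ 0, and let X₁,…,X_n, Y₁,…,Y_n, Z, D be elements of L satisfying the extended Heisenberg relations: [X_i, Y_j] = δ_{ij} Z, [X_i, X_j] = [Y_i, Y_j] = 0, [D, X_i] = X_i, [D, Y_i] = −Y_i for all i, j, and [Z, X_i] = [Z, Y_i] = [Z, D] = 0. Let r = Σ_{k} a_k ⊗ b_k ∈ L ⊗ L be the element r = 2λ·(Σ_{i=1}^n X_i ⊗ Y_i + (1/2)(Z ⊗ D + D ⊗ Z)). Then r satisfies the classical Yang–Baxter equation: the element [r₁₂, r₁₃] + [r₁₂, r₂₃] + [r₁₃, r₂₃] := Σ_{k,l} ([a_k, a_l] ⊗ b_k ⊗ b_l + a_k ⊗ [b_k, a_l] ⊗ b_l + a_k ⊗ a_l ⊗ [b_k, b_l]) vanishes in L ⊗ L ⊗ L; moreover the symmetric element r + flip(r) ∈ L ⊗ L (where flip(a ⊗ b) = b ⊗ a) is invariant under the adjoint action of every element of the span of {X₁,…,X_n, Y₁,…,Y_n, Z, D}: ad_u(r + flip(r)) = 0, where ad_u(a ⊗ b) = [u,a] ⊗ b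 + a ⊗ [u,b]. -/

import Mathlib

open scoped TensorProduct BigOperators

noncomputable section

/-- The first components `a_k` of the representation of
`r = 2λ·(Σ_i X_i ⊗ Y_i + (1/2)(Z ⊗ D + D ⊗ Z))` as `Σ_k a_k ⊗ b_k`. -/
def afam {L : Type*} [LieRing L] [LieAlgebra ℝ L] {n : ℕ} (lam : ℝ)
    (X : Fin n → L) (Z D : L) : Fin n ⊕ Fin 2 → L := fun k =>
  match k with
  | Sum.inl i => (2 * lam) • X i
  | Sum.inr j => if j = 0 then lam • Z else lam • D

/-- The second components `b_k` of the representation of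
`r = 2λ·(Σ_i X_i ⊗ Y_i + (1/2)(Z ⊗ D + D ⊗ Z))` as `Σ_k a_k ⊗ b_k`. -/
def bfam {L : Type*} [LieRing L] {n : ℕ} (Y : Fin n → L) (Z D : L) :
    Fin n ⊕ Fin 2 → L := fun k =>
  match k with
  | Sum.inl i => Y i
  | Sum.inr j => if j = 0 then D else Z

/-- The adjoint action of `u` on the tensor square `L ⊗ L`, determined by
`ad_u(a ⊗ b) = [u,a] ⊗ b + a ⊗ [u,b]`. -/
def adTsq (L : Type*) [LieRing L] [LieAlgebra ℝ L] (u : L) :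
    (L ⊗[ℝ] L) →ₗ[ℝ] (L ⊗[ℝ] L) :=
  TensorProduct.map (LieAlgebra.ad ℝ L u) LinearMap.id
    + TensorProduct.map LinearMap.id (LieAlgebra.ad ℝ L u)

/-- Let `X_i, Y_i, Z, D` satisfy the extended Heisenberg relations in a real Lie
algebra `L`, and let `r = Σ_k a_k ⊗ b_k = 2λ·(Σ_i X_i ⊗ Y_i + ½(Z ⊗ D + D ⊗ Z))`.
Then `r` satisfies the classical Yang–Baxter equation
`[r₁₂,r₁₃] + [r₁₂,r₂₃] + [r₁₃,r₂₃] = 0` in `L ⊗ L ⊗ L`, and the symmetric element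
`r + flip(r)` is invariant under the adjoint action of every element of the span
of `{X₁,…,X_n, Y₁,…,Y_n, Z, D}`. -/
theorem r_matrix_quasitriangular {L : Type*} [LieRing L] [LieAlgebra ℝ L]
    {n : ℕ} (hn : 1 ≤ n) (lam : ℝ) (hlam : lam ≠ 0)
    (X Y : Fin n → L) (Z D : L)
    (hXY : ∀ i j, ⁅X i, Y j⁆ = if i = j then Z else 0)
    (hXX : ∀ i j, ⁅X i, X j⁆ = 0)
    (hYY : ∀ i j, ⁅Y i, Y j⁆ = 0)
    (hDX : ∀ i, ⁅D, X i⁆ = X i)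
    (hDY : ∀ i, ⁅D, Y i⁆ = -Y i)
    (hZX : ∀ i, ⁅Z, X i⁆ = 0)
    (hZY : ∀ i, ⁅Z, Y i⁆ = 0)
    (hZD : ⁅Z, D⁆ = 0) :
    -- the family (a_k, b_k) represents r = 2λ(Σ X_i ⊗ Y_i + ½(Z ⊗ D + D ⊗ Z))
    ((∑ k, afam lam X Z D k ⊗ₜ[ℝ] bfam Y Z D k)
        = (2 * lam) • ((∑ i, X i ⊗ₜ[ℝ] Y i)
            + (2⁻¹ : ℝ) • (Z ⊗ₜ[ℝ] D + D ⊗ₜ[ℝ] Z))) ∧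
    -- the classical Yang--Baxter equation
    ((∑ k, ∑ l,
        (⁅afam lam X Z D k, afam lam X Z D l⁆ ⊗ₜ[ℝ] (bfam Y Z D k ⊗ₜ[ℝ] bfam Y Z D l)
          + afam lam X Z D k ⊗ₜ[ℝ] (⁅bfam Y Z D k, afam lam X Z D l⁆ ⊗ₜ[ℝ] bfam Y Z D l)
          + afam lam X Z D k ⊗ₜ[ℝ] (afam lam X Z D l ⊗ₜ[ℝ] ⁅bfam Y Z D k, bfam Y Z D l⁆)))
        = (0 : L ⊗[ℝ] (L ⊗[ℝ] L))) ∧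
    -- ad-invariance of r + flip(r)
    (∀ u ∈ Submodule.span ℝ (Set.range X ∪ Set.range Y ∪ {Z, D}),
        adTsq L u
          ((∑ k, afam lam X Z D k ⊗ₜ[ℝ] bfam Y Z D k)
            + ∑ k, bfam Y Z D k ⊗ₜ[ℝ] afam lam X Z D k) = 0) := by

  have hYX : ∀ i j, ⁅Y i, X j⁆ = if j = i then -Z else 0 := by
    intro i j; rw [← lie_skew, hXY j i]; split <;> simp
  have hXD : ∀ i, ⁅X i, D⁆ = -X i := by intro i; rw [← lie_skew, hDX]
  have hYD : ∀ i, ⁅Y i, D⁆ = Y i := by intro i; rw [← lie_skew, hDY]; simp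
  have hXZ : ∀ i, ⁅X i, Z⁆ = 0 := by intro i; rw [← lie_skew, hZX]; simp
  have hYZ : ∀ i, ⁅Y i, Z⁆ = 0 := by intro i; rw [← lie_skew, hZY]; simp
  have hDZ : ⁅D, Z⁆ = 0 := by rw [← lie_skew, hZD]; simp
  refine ⟨?_, ?_, ?_⟩
  · -- the representation of r
    simp only [afam, bfam, Fintype.sum_sum_type, Fin.sum_univ_two, Fin.isValue,
      if_true, one_ne_zero, if_false, reduceIte, smul_add, Finset.smul_sum,
      TensorProduct.smul_tmul', smul_smul]
    ring_nf
  · -- the classical Yang--Baxter equation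
    simp only [afam, bfam, Fintype.sum_sum_type, Fin.sum_univ_two, Fin.isValue,
      if_true, one_ne_zero, if_false, reduceIte, lie_smul, smul_lie, smul_smul,
      hXY, hYX, hXX, hYY, hDX, hDY, hZX, hZY, hZD, hXD, hYD, hXZ, hYZ, hDZ,
      lie_self, smul_zero, TensorProduct.zero_tmul, TensorProduct.tmul_zero,
      TensorProduct.tmul_ite, TensorProduct.ite_tmul, smul_ite,
      Finset.sum_ite_eq, Finset.sum_ite_eq', Finset.mem_univ, if_pos, smul_neg,
      TensorProduct.neg_tmul, TensorProduct.tmul_neg, add_zero, zero_add,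
      TensorProduct.tmul_smul, TensorProduct.smul_tmul', Finset.sum_add_distrib,
      TensorProduct.tmul_add, neg_zero]
    simp only [Finset.sum_const_zero, add_zero, zero_add, neg_smul,
      TensorProduct.neg_tmul, ← TensorProduct.smul_tmul', TensorProduct.tmul_smul,
      smul_smul, ← Finset.sum_add_distrib]
    refine Finset.sum_eq_zero fun i _ => ?_
    module
  · -- ad-invariance of r + flip r
    have hlin : ∀ u : L, adTsq L u
            ((∑ k, afam lam X Z D k ⊗ₜ[ℝ] bfam Y Z D k)
              + ∑ k, bfam Y Z D k ⊗ₜ[ℝ] afam lam X Z D k)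
        = ∑ k, (⁅u, afam lam X Z D k⁆ ⊗ₜ[ℝ] bfam Y Z D k
              + afam lam X Z D k ⊗ₜ[ℝ] ⁅u, bfam Y Z D k⁆
              + (⁅u, bfam Y Z D k⁆ ⊗ₜ[ℝ] afam lam X Z D k
              + bfam Y Z D k ⊗ₜ[ℝ] ⁅u, afam lam X Z D k⁆)) := by
      intro u
      simp [adTsq, map_add, map_sum, TensorProduct.map_tmul, LieAlgebra.ad_apply,
        Finset.sum_add_distrib]
      abel
    intro u hu
    induction hu using Submodule.span_induction with
    | mem v hv =>
      rw [hlin]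
      simp only [Set.union_assoc, Set.mem_union, Set.mem_range, Set.mem_insert_iff,
        Set.mem_singleton_iff] at hv
      obtain (⟨i, rfl⟩ | ⟨i, rfl⟩ | rfl | rfl) := hv <;>
      · simp only [afam, bfam, Fintype.sum_sum_type, Fin.sum_univ_two, Fin.isValue,
          if_true, one_ne_zero, if_false, reduceIte, lie_smul,
          hXY, hYX, hXX, hYY, hDX, hDY, hZX, hZY, hZD, hXD, hYD, hXZ, hYZ, hDZ,
          lie_self, smul_zero, TensorProduct.zero_tmul, TensorProduct.tmul_zero,
          TensorProduct.tmul_ite, TensorProduct.ite_tmul, smul_ite,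
          Finset.sum_ite_eq, Finset.sum_ite_eq', Finset.mem_univ, if_pos, smul_neg,
          TensorProduct.neg_tmul, TensorProduct.tmul_neg, neg_zero,
          ← TensorProduct.smul_tmul', TensorProduct.tmul_smul, smul_smul,
          add_zero, zero_add, Finset.sum_add_distrib, Finset.sum_const_zero,
          neg_smul, ← Finset.sum_add_distrib]
        try simp only [Finset.sum_add_distrib, Finset.sum_ite_eq, Finset.sum_ite_eq',
          Finset.mem_univ, ite_true, Finset.sum_const_zero, add_zero, zero_add]
        try refine Finset.sum_eq_zero fun j _ => ?_
        try module
        try (simp only [← Finset.sum_add_distrib]; exact Finset.sum_eq_zero fun j _ => by module)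
    | zero => simp [adTsq]
    | add a b _ _ ha hb =>
      have : adTsq L (a + b) = adTsq L a + adTsq L b := by
        simp only [adTsq, map_add, TensorProduct.map_add_left,
          TensorProduct.map_add_right]
        abel
      rw [this, LinearMap.add_apply, ha, hb, add_zero]
    | smul c a _ ha =>
      have : adTsq L (c • a) = c • adTsq L a := by
        simp only [adTsq, map_smul, TensorProduct.map_smul_left,
          TensorProduct.map_smul_right, smul_add]
      rw [this, LinearMap.smul_apply, ha, smul_zero]

end
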